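/- Let R and R' be d×d positive definite Hermitian matrices, C a d×d matrix, and M a d×d matrix. Then (M − C)* R⁻¹ (M − C) = (R')² holds if and only if there exists a unitary d×d matrix U such that M = C + R^{1/2} U R', where R^{1/2} is the positive definite square root of R. -/

import Mathlib

open Matrix
open scoped ComplexOrder
open scoped MatrixOrder

theorem stmt5 (d : ℕ) (R R' C M : Matrix (Fin d) (Fin d) ℂ)
    (hR : R.PosDef) (hR' : R'.PosDef) :
    (M - C)ᴴ * R⁻¹ * (M - C) = R' * R' ↔
      ∃ U : Matrix (Fin d) (Fin d) ℂ, U ∈ Matrix.unitaryGroup (Fin d) ℂ ∧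
        M = C + CFC.sqrt R * U * R' := by
  set S := CFC.sqrt R with hSdef
  have hSps : S.PosSemidef := Matrix.nonneg_iff_posSemidef.mp (CFC.sqrt_nonneg R)
  have hSS : S * S = R := CFC.sqrt_mul_sqrt_self R (Matrix.nonneg_iff_posSemidef.mpr hR.posSemidef)
  -- S is invertible
  have hSdet : IsUnit S.det := by
    have : S.det * S.det = R.det := by rw [← det_mul, hSS]
    have hu : IsUnit (S.det * S.det) := by rw [this]; exact hR.det_pos.ne'.isUnit
    exact isUnit_of_mul_isUnit_left hu
  have hR'det : IsUnit R'.det := hR'.det_pos.ne'.isUnit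
  have hSinv_mul : S⁻¹ * S = 1 := nonsing_inv_mul S hSdet
  have hS_mul_inv : S * S⁻¹ = 1 := mul_nonsing_inv S hSdet
  have hR'inv_mul : R'⁻¹ * R' = 1 := nonsing_inv_mul R' hR'det
  have hR'_mul_inv : R' * R'⁻¹ = 1 := mul_nonsing_inv R' hR'det
  have hSH : Sᴴ = S := hSps.isHermitian
  have hSinvH : (S⁻¹)ᴴ = S⁻¹ := by rw [conjTranspose_nonsing_inv, hSH]
  have hR'H : R'ᴴ = R' := hR'.isHermitian
  have hR'invH : (R'⁻¹)ᴴ = R'⁻¹ := by rw [conjTranspose_nonsing_inv, hR'H]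
  have hRinv : R⁻¹ = S⁻¹ * S⁻¹ := by
    rw [← hSS, Matrix.mul_inv_rev]
  constructor
  · intro h
    refine ⟨S⁻¹ * (M - C) * R'⁻¹, ?_, ?_⟩
    · rw [Matrix.mem_unitaryGroup_iff']
      have : star (S⁻¹ * (M - C) * R'⁻¹) = R'⁻¹ * (M - C)ᴴ * S⁻¹ := by
        simp [star_eq_conjTranspose, conjTranspose_mul, hSinvH, hR'invH, mul_assoc]
      rw [this]
      calc R'⁻¹ * (M - C)ᴴ * S⁻¹ * (S⁻¹ * (M - C) * R'⁻¹)
          = R'⁻¹ * ((M - C)ᴴ * R⁻¹ * (M - C)) * R'⁻¹ := by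
            rw [hRinv]; noncomm_ring
        _ = R'⁻¹ * (R' * R') * R'⁻¹ := by rw [h]
        _ = (R'⁻¹ * R') * (R' * R'⁻¹) := by noncomm_ring
        _ = 1 := by rw [hR'inv_mul, hR'_mul_inv, one_mul]
    · have : S * (S⁻¹ * (M - C) * R'⁻¹) * R' = M - C := by
        calc S * (S⁻¹ * (M - C) * R'⁻¹) * R'
            = (S * S⁻¹) * (M - C) * (R'⁻¹ * R') := by noncomm_ring
          _ = M - C := by rw [hS_mul_inv, hR'inv_mul, one_mul, mul_one]
      rw [this]; abel
  · rintro ⟨U, hU, rfl⟩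
    have hUU : Uᴴ * U = 1 := by
      rw [← star_eq_conjTranspose]; exact (Matrix.mem_unitaryGroup_iff'.mp hU)
    have hMC : C + S * U * R' - C = S * U * R' := by abel
    rw [hMC]
    calc (S * U * R')ᴴ * R⁻¹ * (S * U * R')
        = R' * Uᴴ * ((S * (S⁻¹ * S⁻¹)) * S) * U * R' := by
          simp only [conjTranspose_mul, hSH, hR'H, hRinv]; noncomm_ring
      _ = R' * (Uᴴ * U) * R' := by
          rw [← mul_assoc S, hS_mul_inv, one_mul, hSinv_mul]; noncomm_ring
      _ = R' * R' := by rw [hUU, mul_one]
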